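/- Let Θ_{D₄}(y) = (θ₃(y)⁴ + θ₄(y)⁴)/2 denote the theta series of the 2-modular lattice D₄. Then the 2-modular secrecy function Ξ₂(y) = (θ₃(y)·θ₃(2y))² / Θ_{D₄}(y) attains a strict global maximum on (0, ∞) at y = 1/√2: for every y > 0 with y ≠ 1/√2, Ξ₂(y) < Ξ₂(1/√2). -/

import Mathlib

open Real Filter Set

/-- Jacobi theta function θ₂ at purely imaginary argument τ = iy. -/
noncomputable def θ₂ (y : ℝ) : ℝ := ∑' n : ℤ, Real.exp (-Real.pi * ((n : ℝ) + 1/2)^2 * y)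

/-- Jacobi theta function θ₃ at purely imaginary argument τ = iy. -/
noncomputable def θ₃ (y : ℝ) : ℝ := ∑' n : ℤ, Real.exp (-Real.pi * (n : ℝ)^2 * y)

/-- Jacobi theta function θ₄ at purely imaginary argument τ = iy. -/
noncomputable def θ₄ (y : ℝ) : ℝ := ∑' n : ℤ, (-1 : ℝ)^n * Real.exp (-Real.pi * (n : ℝ)^2 * y)

/-- The 2-modular secrecy function of the lattice D₄. -/
noncomputable def Ξ₂D₄ (y : ℝ) : ℝ := (θ₃ y * θ₃ (2*y))^2 / ((θ₃ y ^ 4 + θ₄ y ^ 4) / 2)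

/-! ### Auxiliary lemmas -/

lemma summable_nat_exp {y : ℝ} (hy : 0 < y) (c : ℝ) (hc : 0 ≤ c) :
    Summable fun n : ℕ => rexp (-π * ((n : ℝ) + c) ^ 2 * y) := by
  refine Summable.of_nonneg_of_le (fun n => (Real.exp_pos _).le) (fun n => ?_)
    (Summable.mul_left (rexp (-π * c ^ 2 * y)) (summable_geometric_of_lt_one
      (Real.exp_pos (-π * y)).le
      (Real.exp_lt_one_iff.2 (by nlinarith [Real.pi_pos]))))
  rw [← Real.exp_nat_mul, ← Real.exp_add]
  apply Real.exp_le_exp.2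
  have hn : (0:ℝ) ≤ (n:ℝ) := Nat.cast_nonneg n
  have h0 : (n : ℝ) ≤ (n:ℝ)^2 := by exact_mod_cast Nat.le_self_pow two_ne_zero n
  have h1 : (n:ℝ) ≤ (n:ℝ)^2 + 2 * (n:ℝ) * c := by nlinarith
  have hpy : 0 < π * y := mul_pos Real.pi_pos hy
  nlinarith [mul_le_mul_of_nonneg_left h1 hpy.le]

lemma summable_t3 {y : ℝ} (hy : 0 < y) :
    Summable fun n : ℤ => rexp (-π * (n : ℝ) ^ 2 * y) := by
  apply Summable.of_nat_of_neg_add_one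
  · simpa using summable_nat_exp hy 0 le_rfl
  · have := summable_nat_exp hy 1 zero_le_one
    apply this.congr
    intro n
    congr 1
    push_cast
    ring

lemma summable_t3_norm {y : ℝ} (hy : 0 < y) :
    Summable fun n : ℤ => ‖rexp (-π * (n : ℝ) ^ 2 * y)‖ := by
  simpa [Real.norm_eq_abs, abs_of_pos (Real.exp_pos _)] using summable_t3 hy

lemma summable_t4_norm {y : ℝ} (hy : 0 < y) :
    Summable fun n : ℤ => ‖(-1 : ℝ)^n * rexp (-π * (n : ℝ) ^ 2 * y)‖ := by
  have h : ∀ n : ℤ, ‖(-1 : ℝ)^n * rexp (-π * (n : ℝ) ^ 2 * y)‖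
      = ‖rexp (-π * (n : ℝ) ^ 2 * y)‖ := by
    intro n
    have : |(-1 : ℝ)^n| = 1 := by
      rcases Int.even_or_odd n with he | ho
      · simp [he.neg_one_zpow]
      · simp [ho.neg_one_zpow]
    simp [Real.norm_eq_abs, abs_mul, this]
  rw [funext h]
  exact summable_t3_norm hy

lemma t3_pos {y : ℝ} (hy : 0 < y) : 0 < θ₃ y :=
  Summable.tsum_pos (summable_t3 hy) (fun n => (Real.exp_pos _).le) 0 (Real.exp_pos _)

/-- combined exponent form of the square -/
lemma t3_sq {y : ℝ} (hy : 0 < y) :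
    θ₃ y ^ 2 = ∑' p : ℤ × ℤ, rexp (-π * (((p.1 : ℝ))^2 + ((p.2 : ℝ))^2) * y) := by
  rw [sq, θ₃, tsum_mul_tsum_of_summable_norm (summable_t3_norm hy) (summable_t3_norm hy)]
  apply tsum_congr
  intro p
  rw [← Real.exp_add]
  congr 1
  ring

lemma summable_E {y : ℝ} (hy : 0 < y) :
    Summable fun p : ℤ × ℤ => rexp (-π * (((p.1 : ℝ))^2 + ((p.2 : ℝ))^2) * y) := by
  have := summable_mul_of_summable_norm (summable_t3_norm hy) (summable_t3_norm hy)
  apply this.congr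
  intro p
  rw [← Real.exp_add]
  congr 1
  ring

lemma summable_E4 {y : ℝ} (hy : 0 < y) :
    Summable fun p : ℤ × ℤ =>
      (-1 : ℝ)^(p.1 + p.2) * rexp (-π * (((p.1 : ℝ))^2 + ((p.2 : ℝ))^2) * y) := by
  have := summable_mul_of_summable_norm (summable_t4_norm hy) (summable_t4_norm hy)
  apply this.congr
  intro p
  rw [zpow_add₀ (by norm_num : (-1:ℝ) ≠ 0), mul_mul_mul_comm, ← Real.exp_add]
  congr 1
  ring

lemma t4_sq {y : ℝ} (hy : 0 < y) :
    θ₄ y ^ 2 = ∑' p : ℤ × ℤ,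
      (-1 : ℝ)^(p.1 + p.2) * rexp (-π * (((p.1 : ℝ))^2 + ((p.2 : ℝ))^2) * y) := by
  rw [sq, θ₄, tsum_mul_tsum_of_summable_norm (summable_t4_norm hy) (summable_t4_norm hy)]
  apply tsum_congr
  intro p
  rw [zpow_add₀ (by norm_num : (-1:ℝ) ≠ 0), mul_mul_mul_comm, ← Real.exp_add]
  congr 1
  ring

/-- Landen-type identity : θ₃(y)² + θ₄(y)² = 2 θ₃(2y)². -/
lemma landen {y : ℝ} (hy : 0 < y) : θ₃ y ^ 2 + θ₄ y ^ 2 = 2 * θ₃ (2 * y) ^ 2 := by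
  have h2y : 0 < 2 * y := by linarith
  set f : ℤ × ℤ → ℝ := fun p =>
    (1 + (-1 : ℝ)^(p.1 + p.2)) * rexp (-π * (((p.1 : ℝ))^2 + ((p.2 : ℝ))^2) * y) with hf
  have hsum : θ₃ y ^ 2 + θ₄ y ^ 2 = ∑' p, f p := by
    rw [t3_sq hy, t4_sq hy, ← Summable.tsum_add (summable_E hy) (summable_E4 hy)]
    apply tsum_congr
    intro p
    simp only [hf]
    ring
  have hinj : Function.Injective (fun q : ℤ × ℤ => ((q.1 + q.2, q.1 - q.2) : ℤ × ℤ)) := by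
    intro a b hab
    simp only [Prod.mk.injEq] at hab
    obtain ⟨h1, h2⟩ := hab
    have : a.1 = b.1 := by omega
    have : a.2 = b.2 := by omega
    exact Prod.ext ‹a.1 = b.1› ‹a.2 = b.2›
  have hsupp : Function.support f ⊆
      Set.range (fun q : ℤ × ℤ => ((q.1 + q.2, q.1 - q.2) : ℤ × ℤ)) := by
    intro p hp
    rcases Int.even_or_odd (p.1 + p.2) with he | ho
    · obtain ⟨u, hu⟩ := he
      refine ⟨(u, p.1 - u), ?_⟩
      have h' : p.1 + p.2 = u + u := hu
      show (u + (p.1 - u), u - (p.1 - u)) = p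
      exact Prod.ext (by omega) (by omega)
    · exfalso
      apply hp
      simp only [hf, ho.neg_one_zpow]
      ring
  have hrange := Function.Injective.tsum_eq hinj hsupp
  rw [hsum, ← hrange]
  have hterm : ∀ q : ℤ × ℤ, f (q.1 + q.2, q.1 - q.2)
      = 2 * (rexp (-π * ((q.1:ℝ))^2 * (2*y)) * rexp (-π * ((q.2:ℝ))^2 * (2*y))) := by
    intro q
    have heven : Even ((q.1 + q.2) + (q.1 - q.2)) := ⟨q.1, by ring⟩
    simp only [hf, heven.neg_one_zpow]
    rw [← Real.exp_add]
    have : (-π * ((((q.1 + q.2 : ℤ) : ℝ))^2 + (((q.1 - q.2 : ℤ) : ℝ))^2) * y)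
        = -π * ((q.1:ℝ))^2 * (2*y) + -π * ((q.2:ℝ))^2 * (2*y) := by
      push_cast
      ring
    rw [this]
    norm_num
  calc ∑' q : ℤ × ℤ, f (q.1 + q.2, q.1 - q.2)
      = ∑' q : ℤ × ℤ, 2 * (rexp (-π * ((q.1:ℝ))^2 * (2*y)) * rexp (-π * ((q.2:ℝ))^2 * (2*y))) :=
        tsum_congr hterm
    _ = 2 * ∑' q : ℤ × ℤ, rexp (-π * ((q.1:ℝ))^2 * (2*y)) * rexp (-π * ((q.2:ℝ))^2 * (2*y)) :=
        tsum_mul_left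
    _ = 2 * θ₃ (2 * y) ^ 2 := by
        rw [sq, θ₃, tsum_mul_tsum_of_summable_norm (summable_t3_norm h2y) (summable_t3_norm h2y)]

/-- Modular transformation of θ₃. -/
lemma t3_modular {y : ℝ} (hy : 0 < y) : θ₃ (1 / y) = Real.sqrt y * θ₃ y := by
  have h := Real.tsum_exp_neg_mul_int_sq (a := 1 / y) (by positivity)
  have h1 : (∑' n : ℤ, rexp (-π * (1/y) * (n:ℝ)^2)) = θ₃ (1/y) := by
    rw [θ₃]; exact tsum_congr fun n => by ring_nf
  have h2 : (∑' n : ℤ, rexp (-π / (1/y) * (n:ℝ)^2)) = θ₃ y := by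
    rw [θ₃]
    apply tsum_congr
    intro n
    congr 1
    field_simp
  rw [h1, h2] at h
  rw [h]
  rw [one_div y, Real.inv_rpow hy.le, one_div, inv_inv, ← Real.sqrt_eq_rpow]

lemma sqrt2_sq : Real.sqrt 2 ^ 2 = 2 := Real.sq_sqrt (by norm_num)
lemma sqrt2_pos : 0 < Real.sqrt 2 := Real.sqrt_pos.2 (by norm_num)
lemma sqrt2_lt : Real.sqrt 2 < 3/2 := by nlinarith [sqrt2_sq, sqrt2_pos]

lemma two_mul_inv_sqrt2 : 2 * (1 / Real.sqrt 2) = Real.sqrt 2 := by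
  rw [mul_one_div, div_eq_iff sqrt2_pos.ne']
  nlinarith [sqrt2_sq]

/-- At `y₀ = 1/√2` we have the exact equality `θ₃(y₀)² = √2 θ₃(2 y₀)²`. -/
lemma F_zero : θ₃ (1 / Real.sqrt 2) ^ 2 = Real.sqrt 2 * θ₃ (2 * (1 / Real.sqrt 2)) ^ 2 := by
  have h := t3_modular (y := Real.sqrt 2) sqrt2_pos
  rw [two_mul_inv_sqrt2, h, mul_pow, Real.sq_sqrt sqrt2_pos.le]

/-- Key strict inequality for `y > 1/√2`. -/
lemma key_gt {y : ℝ} (hy : 1 / Real.sqrt 2 < y) :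
    θ₃ y ^ 2 < Real.sqrt 2 * θ₃ (2 * y) ^ 2 := by
  set s : ℝ := Real.sqrt 2 with hs
  have hs2 : s ^ 2 = 2 := sqrt2_sq
  have hs0 : 0 < s := sqrt2_pos
  set y₀ : ℝ := 1 / s with hy₀def
  have hy₀0 : 0 < y₀ := by positivity
  have hy0 : 0 < y := lt_trans hy₀0 hy
  have hnum : 2 * s * rexp (-π * y₀) < 1 := by
    have h1 : (3 : ℝ) < rexp (π * y₀) := by
      have hπ : 3 < π := Real.pi_gt_three
      have h2 : (2:ℝ) < π * y₀ := by
        rw [hy₀def, mul_one_div, lt_div_iff₀ hs0]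
        nlinarith [sqrt2_lt]
      nlinarith [Real.add_one_le_exp (π * y₀)]
    have h2 : rexp (-π * y₀) = (rexp (π * y₀))⁻¹ := by
      rw [← Real.exp_neg]; ring_nf
    rw [h2, mul_inv_lt_iff₀ (Real.exp_pos _)]
    nlinarith [sqrt2_lt, Real.exp_pos (π * y₀)]
  have core : ∀ k : ℝ, 1 ≤ k →
      s * rexp (-π * k * (2 * y₀)) - rexp (-π * k * y₀)
        < s * rexp (-π * k * (2 * y)) - rexp (-π * k * y) := by
    intro k hk
    set A : ℝ := rexp (-π * k * y) with hA
    set B : ℝ := rexp (-π * k * y₀) with hB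
    have hAB : A < B := by
      apply Real.exp_lt_exp.2
      have : 0 < π * k := by positivity
      nlinarith
    have hA2 : rexp (-π * k * (2 * y)) = A ^ 2 := by
      rw [hA, ← Real.exp_nat_mul]; ring_nf
    have hB2 : rexp (-π * k * (2 * y₀)) = B ^ 2 := by
      rw [hB, ← Real.exp_nat_mul]; ring_nf
    have hBsmall : B ≤ rexp (-π * y₀) := by
      apply Real.exp_le_exp.2
      nlinarith [mul_le_mul_of_nonneg_left hk (mul_pos Real.pi_pos hy₀0).le]
    have hApos : 0 < A := Real.exp_pos _
    have hsab : s * (A + B) < 1 := by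
      calc s * (A + B) < s * (2 * B) := by nlinarith
        _ ≤ s * (2 * rexp (-π * y₀)) := by nlinarith
        _ < 1 := by nlinarith
    rw [hA2, hB2]
    nlinarith [mul_pos (sub_pos.2 hAB) (sub_pos.2 hsab)]
  have hrep : ∀ t : ℝ, 0 < t → s * θ₃ (2 * t) ^ 2 - θ₃ t ^ 2
      = ∑' p : ℤ × ℤ, (s * rexp (-π * (((p.1 : ℝ))^2 + ((p.2 : ℝ))^2) * (2 * t))
          - rexp (-π * (((p.1 : ℝ))^2 + ((p.2 : ℝ))^2) * t)) := by
    intro t ht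
    have h2t : 0 < 2 * t := by linarith
    rw [t3_sq ht, t3_sq h2t, ← tsum_mul_left,
      ← Summable.tsum_sub ((summable_E h2t).mul_left s) (summable_E ht)]
  have hsummand : ∀ t : ℝ, 0 < t → Summable (fun p : ℤ × ℤ =>
      s * rexp (-π * (((p.1 : ℝ))^2 + ((p.2 : ℝ))^2) * (2 * t))
        - rexp (-π * (((p.1 : ℝ))^2 + ((p.2 : ℝ))^2) * t)) := by
    intro t ht
    exact ((summable_E (by linarith : (0:ℝ) < 2 * t)).mul_left s).sub (summable_E ht)
  have hk1 : ∀ p : ℤ × ℤ, p ≠ (0, 0) → (1 : ℝ) ≤ ((p.1 : ℝ))^2 + ((p.2 : ℝ))^2 := by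
    intro p hp
    have hor : p.1 ≠ 0 ∨ p.2 ≠ 0 := by
      by_contra hcon
      push_neg at hcon
      exact hp (Prod.ext hcon.1 hcon.2)
    have hsq : ∀ m : ℤ, m ≠ 0 → (1:ℝ) ≤ ((m:ℝ))^2 := by
      intro m hm
      have h1 : (1:ℤ) ≤ m^2 := by
        rcases lt_or_gt_of_ne hm with h | h
        · nlinarith
        · nlinarith
      exact_mod_cast h1
    rcases hor with h | h
    · nlinarith [hsq p.1 h, sq_nonneg ((p.2 : ℝ))]
    · nlinarith [hsq p.2 h, sq_nonneg ((p.1 : ℝ))]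
  have hmain : s * θ₃ (2 * y₀) ^ 2 - θ₃ y₀ ^ 2 < s * θ₃ (2 * y) ^ 2 - θ₃ y ^ 2 := by
    rw [hrep y₀ hy₀0, hrep y hy0]
    refine Summable.tsum_lt_tsum (i := ((1 : ℤ), (0 : ℤ))) ?_ ?_ (hsummand y₀ hy₀0) (hsummand y hy0)
    · intro p
      by_cases hp : p = (0, 0)
      · subst hp
        norm_num
      · exact (core _ (hk1 p hp)).le
    · have h1 : (((1:ℤ) : ℝ))^2 + (((0:ℤ) : ℝ))^2 = 1 := by norm_num
      simpa [h1] using core 1 le_rfl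
  have hzero : s * θ₃ (2 * y₀) ^ 2 - θ₃ y₀ ^ 2 = 0 := by
    have := F_zero
    rw [← hs, ← hy₀def] at this
    linarith
  linarith

/-- Mirror inequality for `0 < y < 1/√2`, via the modular transformation. -/
lemma key_lt {y : ℝ} (hy0 : 0 < y) (hy : y < 1 / Real.sqrt 2) :
    Real.sqrt 2 * θ₃ (2 * y) ^ 2 < θ₃ y ^ 2 := by
  set s : ℝ := Real.sqrt 2 with hs
  have hs2 : s ^ 2 = 2 := sqrt2_sq
  have hs0 : 0 < s := sqrt2_pos
  have hys : y * s < 1 := (lt_div_iff₀ hs0).1 hy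
  have h2y : 0 < 2 * y := by linarith
  have hz : 1 / s < 1 / (2 * y) := by
    rw [div_lt_div_iff₀ hs0 h2y]
    nlinarith
  have h := key_gt hz
  have e1 : θ₃ (1/(2*y)) = Real.sqrt (2*y) * θ₃ (2*y) := t3_modular h2y
  have e2 : 2 * (1/(2*y)) = 1/y := by
    field_simp
  have e3 : θ₃ (1/y) = Real.sqrt y * θ₃ y := t3_modular hy0
  rw [e1, e2, e3, mul_pow, mul_pow, Real.sq_sqrt h2y.le, Real.sq_sqrt hy0.le] at h
  -- h : 2*y*θ₃(2y)² < s*(y*θ₃ y²)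
  have h' := mul_lt_mul_of_pos_left h hs0
  have heq : s * (s * (y * θ₃ y ^ 2)) = 2 * y * θ₃ y ^ 2 := by
    rw [← mul_assoc, ← mul_assoc, ← sq, hs2]
  rw [heq] at h'
  have h'' : (2 * y) * (s * θ₃ (2*y) ^ 2) < (2 * y) * θ₃ y ^ 2 := by
    nlinarith [h']
  exact lt_of_mul_lt_mul_left h'' h2y.le

set_option maxHeartbeats 1000000 in
/-- The 2-modular secrecy function of D₄ attains a strict global maximum on (0,∞)
at y = 1/√2. -/
theorem D4_secrecy_max (y : ℝ) (hy : 0 < y) (hne : y ≠ 1 / Real.sqrt 2) :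
    Ξ₂D₄ y < Ξ₂D₄ (1 / Real.sqrt 2) := by
  set s : ℝ := Real.sqrt 2 with hs
  have hs2 : s ^ 2 = 2 := sqrt2_sq
  have hs0 : 0 < s := sqrt2_pos
  have hy₀0 : (0:ℝ) < 1 / s := by positivity
  have h2y₀0 : (0:ℝ) < 2 * (1 / s) := by positivity
  have h2y : (0:ℝ) < 2 * y := by linarith
  set a : ℝ := θ₃ y ^ 2 with ha
  set b : ℝ := θ₄ y ^ 2 with hb
  set c : ℝ := θ₃ (2 * y) ^ 2 with hc
  set a₀ : ℝ := θ₃ (1 / s) ^ 2 with ha₀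
  set b₀ : ℝ := θ₄ (1 / s) ^ 2 with hb₀
  set c₀ : ℝ := θ₃ (2 * (1 / s)) ^ 2 with hc₀
  have hapos : 0 < a := pow_pos (t3_pos hy) 2
  have hcpos : 0 < c := pow_pos (t3_pos h2y) 2
  have hbnn : 0 ≤ b := sq_nonneg _
  have ha₀pos : 0 < a₀ := pow_pos (t3_pos hy₀0) 2
  have hc₀pos : 0 < c₀ := pow_pos (t3_pos h2y₀0) 2
  have hab : a + b = 2 * c := landen hy
  have hab₀ : a₀ + b₀ = 2 * c₀ := landen hy₀0
  have ha₀eq : a₀ = s * c₀ := by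
    rw [ha₀, hc₀]
    exact F_zero
  have hane : a ≠ s * c := by
    rcases lt_or_gt_of_ne hne with h | h
    · exact ne_of_gt (key_lt hy h)
    · exact ne_of_lt (key_gt h)
  have hXi : ∀ t : ℝ, Ξ₂D₄ t
      = (θ₃ t ^ 2 * θ₃ (2*t) ^ 2) / ((( θ₃ t ^ 2)^2 + (θ₄ t ^ 2)^2) / 2) := by
    intro t
    have h4 : ∀ x : ℝ, x^4 = (x^2)^2 := fun x => by ring
    rw [Ξ₂D₄, mul_pow, h4, h4]
  have hgoal : Ξ₂D₄ y = (a * c) / ((a^2 + b^2)/2) := by rw [hXi y]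
  have hgoal₀ : Ξ₂D₄ (1 / s) = (a₀ * c₀) / ((a₀^2 + b₀^2)/2) := by rw [hXi (1/s)]
  rw [hgoal, hgoal₀]
  have hd1 : (0:ℝ) < (a^2 + b^2)/2 := by positivity
  have hd2 : (0:ℝ) < (a₀^2 + b₀^2)/2 := by positivity
  rw [div_lt_div_iff₀ hd1 hd2]
  have hbeq : b = 2*c - a := by linarith
  have hbeq₀ : b₀ = 2*c₀ - a₀ := by linarith
  have key : a₀*c₀*((a^2+b^2)/2) - a*c*((a₀^2+b₀^2)/2) = s*(a - s*c)^2*c₀^2 := by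
    rw [hbeq, hbeq₀, ha₀eq]
    linear_combination (c₀^2 * c * (a - s*c)) * hs2
  have hq : 0 < (a - s*c)^2 :=
    lt_of_le_of_ne (sq_nonneg _) (Ne.symm (pow_ne_zero 2 (sub_ne_zero.2 hane)))
  nlinarith [mul_pos (mul_pos hs0 hq) (pow_pos hc₀pos 2)]
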